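/- For every integer n ≥ 3, the cycle C_n satisfies bg(C_n) = 3 and b̂g(C_n) = 2. -/

import Mathlib

open Classical

namespace BrushGame

variable {V : Type*}

/-- The number of neighbours of `x` in `G` that belong to the list `l`. -/
noncomputable def nbr [Fintype V] (G : SimpleGraph V) (x : V) (l : List V) : ℕ :=
  (Finset.univ.filter (fun u => G.Adj x u ∧ u ∈ l)).card

/-- The degree of `x` in `G`. -/
noncomputable def deg [Fintype V] (G : SimpleGraph V) (x : V) : ℕ :=
  (Finset.univ.filter (fun u => G.Adj x u)).card

/-- `l` is a valid sequence of vertex firings starting from the brush assignment `c`: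
the vertices of `l` fire in order; when a vertex fires, the number of brushes on it
(those from `c` plus one from each previously fired neighbour) is at least its number of
still-dirty neighbours. -/
def FiringSeq [Fintype V] (G : SimpleGraph V) (c : V → ℕ) (l : List V) : Prop :=
  l.Nodup ∧ ∀ i : Fin l.length,
    deg G (l.get i) ≤ c (l.get i) + 2 * nbr G (l.get i) (l.take i.1)

/-- Vertex `v` gets cleaned, starting from the assignment `c` of brushes. -/
def Cleaned [Fintype V] (G : SimpleGraph V) (c : V → ℕ) (v : V) : Prop :=
  ∃ l, FiringSeq G c l ∧ v ∈ l

/-- All vertices are clean, i.e. the game is over. -/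
def Over [Fintype V] (G : SimpleGraph V) (c : V → ℕ) : Prop := ∀ v, Cleaned G c v

/-- An upper bound on the number of turns of any brushing game on `G` (plus one). -/
noncomputable def fuel [Fintype V] (G : SimpleGraph V) : ℕ := (∑ v, deg G v) + 1

/-- The value (number of brushes placed from now on, under optimal play) of the brushing
game on `G` from the brush assignment `c`, with `n` turns of fuel remaining;
`mover = true` means that it is Min's turn to place a brush (on a dirty vertex),
`mover = false` that it is Max's turn.  The fuel never runs out along legal play when
the game is started with fuel `fuel G`. -/
noncomputable def val [Fintype V] (G : SimpleGraph V) : Bool → ℕ → (V → ℕ) → ℕ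
  | _, 0, _ => 0
  | mover, n + 1, c =>
    if Over G c then 0
    else if mover then
      1 + sInf {k | ∃ v, ¬ Cleaned G c v ∧ k = val G false n (Function.update c v (c v + 1))}
    else
      1 + sSup {k | ∃ v, ¬ Cleaned G c v ∧ k = val G true n (Function.update c v (c v + 1))}

/-- The game brush number of `G` starting from the initial configuration `f`, Min to move. -/
noncomputable def bgFrom [Fintype V] (G : SimpleGraph V) (f : V → ℕ) : ℕ :=
  val G true (fuel G) f

/-- The game brush number of `G` starting from the initial configuration `f`, Max to move. -/
noncomputable def bghatFrom [Fintype V] (G : SimpleGraph V) (f : V → ℕ) : ℕ :=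
  val G false (fuel G) f

/-- The (Min-start) game brush number of `G`. -/
noncomputable def bg [Fintype V] (G : SimpleGraph V) : ℕ := bgFrom G (fun _ => 0)

/-- The Max-start game brush number of `G`. -/
noncomputable def bghat [Fintype V] (G : SimpleGraph V) : ℕ := bghatFrom G (fun _ => 0)

/-- `G` can be cleaned by the configuration `f`. -/
def CleansBy [Fintype V] (G : SimpleGraph V) (f : V → ℕ) : Prop :=
  ∃ l, FiringSeq G f l ∧ ∀ v : V, v ∈ l

/-- The brush number of `G`. -/
noncomputable def bNum [Fintype V] (G : SimpleGraph V) : ℕ :=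
  sInf {k | ∃ f, CleansBy G f ∧ k = ∑ v, f v}

end BrushGame

/-- The cycle graph on `Fin n`: `a` is adjacent to `b` iff they are distinct and
consecutive modulo `n`. -/
def cycleG (n : ℕ) : SimpleGraph (Fin n) :=
  SimpleGraph.fromRel (fun a b => ((a : ℕ) + 1) % n = (b : ℕ))

------------------------------------------------------------------------
namespace BrushGameAux
open BrushGame

variable {V : Type*}

lemma nbr_nil [Fintype V] (G : SimpleGraph V) (x : V) : nbr G x [] = 0 := by
  simp [nbr]

lemma val_of_over [Fintype V] (G : SimpleGraph V) (b : Bool) (m : ℕ) {c : V → ℕ}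
    (h : Over G c) : val G b m c = 0 := by
  cases m with
  | zero => rfl
  | succ m => simp [val, h]

variable {n : ℕ}

lemma fin_one_val [NeZero n] (hn : 3 ≤ n) : (1 : Fin n).val = 1 := by
  rw [Fin.val_one', Nat.mod_eq_of_lt (by omega)]

lemma cycle_adj [NeZero n] (hn : 3 ≤ n) (a b : Fin n) :
    (cycleG n).Adj a b ↔ a ≠ b ∧ (a + 1 = b ∨ b + 1 = a) := by
  have hr : ∀ x y : Fin n, ((x : ℕ) + 1) % n = (y : ℕ) ↔ x + 1 = y := by
    intro x y
    rw [← Fin.val_inj, Fin.val_add, fin_one_val hn]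
  simp only [cycleG, SimpleGraph.fromRel_adj, hr]

lemma fin_one_ne_zero [NeZero n] (hn : 3 ≤ n) : (1 : Fin n) ≠ 0 := by
  intro h
  have := congrArg Fin.val h
  rw [fin_one_val hn, Fin.val_zero] at this
  omega

lemma fin_two_ne_zero [NeZero n] (hn : 3 ≤ n) : (1 : Fin n) + 1 ≠ 0 := by
  intro h
  have := congrArg Fin.val h
  rw [Fin.val_add, fin_one_val hn, Fin.val_zero, Nat.mod_eq_of_lt (by omega)] at this
  omega

lemma cycle_deg [NeZero n] (hn : 3 ≤ n) (v : Fin n) : deg (cycleG n) v = 2 := by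
  have key : Finset.univ.filter (fun u => (cycleG n).Adj v u) = {v + 1, v - 1} := by
    ext u
    simp only [Finset.mem_filter, Finset.mem_univ, true_and, Finset.mem_insert,
      Finset.mem_singleton, cycle_adj hn]
    constructor
    · rintro ⟨hne, h | h⟩
      · exact Or.inl h.symm
      · exact Or.inr (eq_sub_of_add_eq h)
    · rintro (rfl | rfl)
      · exact ⟨fun h => fin_one_ne_zero hn (left_eq_add.mp h), Or.inl rfl⟩
      · refine ⟨fun h => ?_, Or.inr (sub_add_cancel v 1)⟩
        have h' : v + 1 = v := by nth_rewrite 1 [h]; exact sub_add_cancel v 1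
        exact fin_one_ne_zero hn (add_left_cancel (show v + 1 = v + 0 by rw [add_zero]; exact h'))
  have hne : v + 1 ≠ v - 1 := by
    intro h
    have h' : v + (1 + 1) = v + 0 := by
      rw [← add_assoc, h, sub_add_cancel, add_zero]
    exact fin_two_ne_zero hn (add_left_cancel h')
  rw [deg, key, Finset.card_insert_of_notMem (by simpa using hne), Finset.card_singleton]

lemma cycle_cleaned [NeZero n] (hn : 3 ≤ n) (c : Fin n → ℕ) (v : Fin n) :
    Cleaned (cycleG n) c v ↔ ∃ w, 2 ≤ c w := by
  constructor
  · rintro ⟨l, ⟨hnd, hf⟩, hv⟩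
    have h0 : 0 < l.length := List.length_pos_iff.mpr (by rintro rfl; simp at hv)
    have h := hf ⟨0, h0⟩
    rw [cycle_deg hn] at h
    simp only [List.take_zero, nbr_nil, Nat.mul_zero, Nat.add_zero] at h
    exact ⟨l.get ⟨0, h0⟩, h⟩
  · rintro ⟨w, hw⟩
    set f : Fin n → Fin n := fun i => w + i with hf
    have hinj : Function.Injective f := fun i j h => by simpa [hf] using h
    have hlen : (List.ofFn f).length = n := List.length_ofFn (f := f)
    have hget : ∀ (j : ℕ) (hj : j < (List.ofFn f).length), (List.ofFn f)[j] = w + ⟨j, hlen ▸ hj⟩ := by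
      intro j hj
      rw [List.getElem_ofFn]
    refine ⟨List.ofFn f, ⟨List.nodup_ofFn.mpr hinj, ?_⟩, ?_⟩
    · intro i
      obtain ⟨k, hk⟩ := i
      have hkn : k < n := hlen ▸ hk
      have hgi : (List.ofFn f).get ⟨k, hk⟩ = w + ⟨k, hkn⟩ := by
        rw [List.get_eq_getElem, hget k hk]
      rw [cycle_deg hn, hgi]
      rcases Nat.eq_zero_or_pos k with h0 | h1
      · subst h0
        have : w + (⟨0, by omega⟩ : Fin n) = w := by
          have h0 : (⟨0, by omega⟩ : Fin n) = 0 := by apply Fin.ext; simp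
          rw [h0, add_zero]
        rw [this]
        omega
      · -- previous vertex
        have hk1n : k - 1 < n := by omega
        have hadj : (cycleG n).Adj (w + ⟨k, hkn⟩) (w + ⟨k - 1, hk1n⟩) := by
          rw [cycle_adj hn]
          constructor
          · intro h
            have := add_left_cancel h
            rw [Fin.mk.injEq] at this
            omega
          · right
            rw [add_assoc]
            congr 1
            rw [← Fin.val_inj, Fin.val_add, fin_one_val hn]
            show (k - 1 + 1) % n = k
            rw [Nat.mod_eq_of_lt (by omega)]
            omega
        have hmem : (w + ⟨k - 1, hk1n⟩) ∈ (List.ofFn f).take k := by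
          have hlt : k - 1 < ((List.ofFn f).take k).length := by
            rw [List.length_take]; omega
          have : ((List.ofFn f).take k)[k - 1] = w + ⟨k - 1, hk1n⟩ := by
            rw [List.getElem_take, hget (k - 1) (by omega)]
          rw [← this]
          exact List.getElem_mem _
        have hnbr : 1 ≤ nbr (cycleG n) (w + ⟨k, hkn⟩) ((List.ofFn f).take k) := by
          refine Finset.card_pos.mpr ⟨w + ⟨k - 1, hk1n⟩, ?_⟩
          simp only [Finset.mem_filter, Finset.mem_univ, true_and]
          exact ⟨hadj, hmem⟩
        show 2 ≤ c (w + ⟨k, hkn⟩) + 2 * nbr (cycleG n) (w + ⟨k, hkn⟩) ((List.ofFn f).take k)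
        omega
    · exact (List.mem_ofFn (f := f) (a := v)).mpr ⟨v - w, by simp [hf, add_comm, sub_add_cancel]⟩

lemma cycle_over [NeZero n] (hn : 3 ≤ n) (c : Fin n → ℕ) :
    Over (cycleG n) c ↔ ∃ w, 2 ≤ c w := by
  constructor
  · intro h
    exact (cycle_cleaned hn c ⟨0, by omega⟩).mp (h _)
  · intro h v
    exact (cycle_cleaned hn c v).mpr h

/-- `Function.update` with the classical decidability instance, as it appears in `val`. -/
noncomputable def bump {W : Type*} (c : W → ℕ) (x : W) : W → ℕ :=
  @Function.update _ _ (fun a b => propDecidable (a = b)) c x (c x + 1)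

lemma bump_apply {W : Type*} (c : W → ℕ) (x v : W) :
    bump c x v = if v = x then c x + 1 else c v := by
  rw [bump, Function.update_apply]

lemma val_succ {W : Type*} [Fintype W] (G : SimpleGraph W) (mover : Bool) (m : ℕ)
    (c : W → ℕ) :
    val G mover (m + 1) c =
      if Over G c then 0
      else if mover then
        1 + sInf {k | ∃ v, ¬ Cleaned G c v ∧ k = val G false m (bump c v)}
      else
        1 + sSup {k | ∃ v, ¬ Cleaned G c v ∧ k = val G true m (bump c v)} := by
  rfl

lemma val_min [NeZero n] (hn : 3 ≤ n) (m : ℕ) (c : Fin n → ℕ)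
    (hno : ∀ w, c w ≤ 1) (v : Fin n) (hv : 1 ≤ c v) :
    val (cycleG n) true (m + 1) c = 1 := by
  have hnex : ¬ ∃ w, 2 ≤ c w := by push_neg; intro w; exact Nat.lt_succ_of_le (hno w)
  have hOver : ¬ Over (cycleG n) c := fun h => hnex ((cycle_over hn c).mp h)
  rw [val_succ, if_neg hOver, if_pos rfl]
  have hmem : (0 : ℕ) ∈ {k | ∃ x, ¬ Cleaned (cycleG n) c x ∧
      k = val (cycleG n) false m (bump c x)} := by
    refine ⟨v, ?_, ?_⟩
    · rw [cycle_cleaned hn]; exact hnex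
    · rw [val_of_over _ _ _ ((cycle_over hn _).mpr
        ⟨v, by rw [bump_apply, if_pos rfl]; omega⟩)]
  rw [Nat.sInf_eq_zero.mpr (Or.inl hmem)]

lemma val_max [NeZero n] (hn : 3 ≤ n) (m : ℕ) (c : Fin n → ℕ)
    (hno : ∀ w, c w ≤ 1) (v : Fin n) (hv : 1 ≤ c v)
    (u : Fin n) (hu : c u = 0) :
    val (cycleG n) false (m + 2) c = 2 := by
  have hnex : ¬ ∃ w, 2 ≤ c w := by push_neg; intro w; exact Nat.lt_succ_of_le (hno w)
  have hOver : ¬ Over (cycleG n) c := fun h => hnex ((cycle_over hn c).mp h)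
  show val (cycleG n) false (m + 1 + 1) c = 2
  rw [val_succ, if_neg hOver, if_neg (by simp)]
  set S := {k | ∃ x, ¬ Cleaned (cycleG n) c x ∧
      k = val (cycleG n) true (m + 1) (bump c x)} with hS
  have hub : ∀ k ∈ S, k ≤ 1 := by
    rintro k ⟨x, -, rfl⟩
    by_cases hx : ∃ w, 2 ≤ bump c x w
    · rw [val_of_over _ _ _ ((cycle_over hn _).mpr hx)]; omega
    · push_neg at hx
      have hv' : 1 ≤ bump c x v := by
        rw [bump_apply]; split <;> omega
      rw [val_min hn m _ (fun w => by have := hx w; omega) v hv']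
  have hmem : (1 : ℕ) ∈ S := by
    refine ⟨u, by rw [cycle_cleaned hn]; exact hnex, ?_⟩
    have hvu : v ≠ u := by intro h; rw [h, hu] at hv; omega
    rw [val_min hn m _ ?_ v ?_]
    · intro w
      rw [bump_apply]; split <;> [omega; exact hno w]
    · rw [bump_apply, if_neg hvu]; exact hv
  have hsup : sSup S = 1 :=
    le_antisymm (csSup_le ⟨1, hmem⟩ hub) (le_csSup ⟨1, fun k hk => hub k hk⟩ hmem)
  rw [hsup]

lemma fuel_eq [NeZero n] (hn : 3 ≤ n) : fuel (cycleG n) = 2 * n + 1 := by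
  rw [fuel]
  have : ∀ v : Fin n, deg (cycleG n) v = 2 := cycle_deg hn
  rw [Finset.sum_congr rfl (fun v _ => this v), Finset.sum_const, Finset.card_univ,
    Fintype.card_fin, smul_eq_mul, Nat.mul_comm]

lemma exists_ne_fin (hn : 3 ≤ n) (x : Fin n) : ∃ u : Fin n, u ≠ x := by
  rcases eq_or_ne x ⟨0, by omega⟩ with rfl | h
  · exact ⟨⟨1, by omega⟩, by simp [Fin.ext_iff]⟩
  · exact ⟨⟨0, by omega⟩, fun h' => h h'.symm⟩

end BrushGameAux


/-- For every integer `n ≥ 3`, the cycle `C_n` satisfies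
`bg(C_n) = 3` and `b̂g(C_n) = 2`. -/
theorem game_brush_number_cycle (n : ℕ) (hn : 3 ≤ n) :
    BrushGame.bg (cycleG n) = 3 ∧ BrushGame.bghat (cycleG n) = 2 := by
  open BrushGame BrushGameAux in
  haveI : NeZero n := ⟨by omega⟩
  obtain ⟨m, hm⟩ : ∃ m, fuel (cycleG n) = (m + 2) + 1 :=
    ⟨2 * n - 2, by rw [fuel_eq hn]; omega⟩
  set c0 : Fin n → ℕ := fun _ => 0 with hc0
  have hnex : ¬ ∃ w, 2 ≤ c0 w := by simp [hc0]
  have hOver : ¬ Over (cycleG n) c0 := fun h => hnex ((cycle_over hn c0).mp h)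
  have hncl : ∀ x : Fin n, ¬ Cleaned (cycleG n) c0 x := by
    intro x; rw [cycle_cleaned hn]; exact hnex
  have hx0 : (⟨0, by omega⟩ : Fin n) = ⟨0, by omega⟩ := rfl
  have hvalmax : ∀ x : Fin n, val (cycleG n) false (m + 2) (bump c0 x) = 2 := by
    intro x
    obtain ⟨u, hux⟩ := exists_ne_fin hn x
    refine val_max hn m _ (fun w => by rw [bump_apply]; split <;> simp [hc0]) x
      (by rw [bump_apply, if_pos rfl]) u (by rw [bump_apply, if_neg hux])
  have hvalmin : ∀ x : Fin n, val (cycleG n) true (m + 2) (bump c0 x) = 1 := by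
    intro x
    exact val_min hn (m + 1) _ (fun w => by rw [bump_apply]; split <;> simp [hc0]) x
      (by rw [bump_apply, if_pos rfl])
  constructor
  · show val (cycleG n) true (fuel (cycleG n)) c0 = 3
    rw [hm, val_succ, if_neg hOver, if_pos rfl]
    have hset : {k | ∃ v, ¬ Cleaned (cycleG n) c0 v ∧
        k = val (cycleG n) false (m + 2) (bump c0 v)} = {2} := by
      ext k
      simp only [Set.mem_setOf_eq, Set.mem_singleton_iff]
      constructor
      · rintro ⟨x, -, rfl⟩; exact hvalmax x
      · rintro rfl
        exact ⟨⟨0, by omega⟩, hncl _, (hvalmax _).symm⟩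
    rw [hset, csInf_singleton]
  · show val (cycleG n) false (fuel (cycleG n)) c0 = 2
    rw [hm, val_succ, if_neg hOver, if_neg (by simp)]
    have hset : {k | ∃ v, ¬ Cleaned (cycleG n) c0 v ∧
        k = val (cycleG n) true (m + 2) (bump c0 v)} = {1} := by
      ext k
      simp only [Set.mem_setOf_eq, Set.mem_singleton_iff]
      constructor
      · rintro ⟨x, -, rfl⟩; exact hvalmin x
      · rintro rfl
        exact ⟨⟨0, by omega⟩, hncl _, (hvalmin _).symm⟩
    rw [hset, csSup_singleton]
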